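/- Let V be a k-vector space with a bilinear pairing ⟨-,-⟩ : V × V → k, and let R = T_k(V) be the tensor algebra. Define a bilinear operation {{-,-}} on R by {{(v_1,…,v_n),(w_1,…,w_m)}} = ∑_{i,j} ⟨v_i,w_j⟩ (w_1,…,w_{j-1},v_{i+1},…,v_n) ⊗ (v_1,…,v_{i-1},w_{j+1},…,w_m), extended by {{r,1}} = {{1,r}} = 0, where (u_1,…,u_p) denotes u_1 ⊗ ⋯ ⊗ u_p ∈ T_kV. Then for all a, b, c ∈ R, {{a, bc}} = {{a,b}}(1⊗c) + (b⊗1){{a,c}}, where R⊗R carries the outer R-bimodule structure; i.e., {{a,−}} is a derivation R → R⊗R. -/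

import Mathlib

open TensorProduct

/-- The monomial `v₁ ⊗ ⋯ ⊗ vₙ` in the tensor algebra associated to a list of
elements of `V`. -/
noncomputable def prodGen (k : Type*) [Field k] (V : Type*) [AddCommGroup V]
    [Module k V] (l : List V) : TensorAlgebra k V :=
  (l.map (TensorAlgebra.ι k)).prod

lemma prodGen_append (k : Type*) [Field k] (V : Type*) [AddCommGroup V]
    [Module k V] (l₁ l₂ : List V) :
    prodGen k V (l₁ ++ l₂) = prodGen k V l₁ * prodGen k V l₂ := by
  simp [prodGen]

lemma prodGen_span (k : Type*) [Field k] (V : Type*) [AddCommGroup V]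
    [Module k V] :
    Submodule.span k (Set.range (prodGen k V)) = ⊤ := by
  rw [eq_top_iff]
  rintro x -
  induction x using TensorAlgebra.induction with
  | algebraMap r =>
      have h1 : (1 : TensorAlgebra k V) ∈ Submodule.span k (Set.range (prodGen k V)) :=
        Submodule.subset_span ⟨[], by simp [prodGen]⟩
      simpa [Algebra.algebraMap_eq_smul_one] using Submodule.smul_mem _ r h1
  | ι v => exact Submodule.subset_span ⟨[v], by simp [prodGen]⟩
  | mul a b ha hb =>
      induction ha using Submodule.span_induction with
      | mem x hx =>
          obtain ⟨l₁, rfl⟩ := hx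
          induction hb using Submodule.span_induction with
          | mem y hy =>
              obtain ⟨l₂, rfl⟩ := hy
              exact Submodule.subset_span ⟨l₁ ++ l₂, prodGen_append k V l₁ l₂⟩
          | zero => simpa using Submodule.zero_mem _
          | add y z _ _ hy hz => simpa [mul_add] using Submodule.add_mem _ hy hz
          | smul r y _ hy => simpa [mul_smul_comm] using Submodule.smul_mem _ r hy
      | zero => simpa using Submodule.zero_mem _
      | add x y _ _ hx hy => simpa [add_mul] using Submodule.add_mem _ hx hy
      | smul r x _ hx => simpa [smul_mul_assoc] using Submodule.smul_mem _ r hx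
  | add a b ha hb => exact Submodule.add_mem _ ha hb

/- STATEMENT 6: The necklace double bracket
`{{(v₁,…,vₙ),(w₁,…,w_m)}} = ∑_{i,j} ⟨vᵢ,w_j⟩ (w₁,…,w_{j-1},v_{i+1},…,vₙ) ⊗
(v₁,…,v_{i-1},w_{j+1},…,w_m)` on `R = T_k V` (extended by `{{r,1}} = {{1,r}} = 0`)
is a derivation in its second argument for the outer bimodule structure on
`R ⊗ R`: `{{a,bc}} = {{a,b}}(1⊗c) + (b⊗1){{a,c}}`. -/
theorem stmt6
    (k : Type*) [Field k]
    (V : Type*) [AddCommGroup V] [Module k V]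
    (B : V →ₗ[k] V →ₗ[k] k)
    (DB : TensorAlgebra k V →ₗ[k] TensorAlgebra k V →ₗ[k]
      (TensorAlgebra k V ⊗[k] TensorAlgebra k V))
    (hone : ∀ r : TensorAlgebra k V, DB r 1 = 0 ∧ DB 1 r = 0)
    (hform : ∀ vs ws : List V,
      DB (prodGen k V vs) (prodGen k V ws)
        = ∑ i : Fin vs.length, ∑ j : Fin ws.length,
            B (vs.get i) (ws.get j) •
              (prodGen k V (ws.take j ++ vs.drop (i + 1)) ⊗ₜ[k]
                prodGen k V (vs.take i ++ ws.drop (j + 1)))) :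
    ∀ a b c : TensorAlgebra k V,
      DB a (b * c)
        = DB a b * ((1 : TensorAlgebra k V) ⊗ₜ[k] c)
          + (b ⊗ₜ[k] (1 : TensorAlgebra k V)) * DB a c := by
  -- the key combinatorial computation on monomials
  have key : ∀ vs ws us : List V,
      DB (prodGen k V vs) (prodGen k V ws * prodGen k V us)
        = DB (prodGen k V vs) (prodGen k V ws) * ((1 : TensorAlgebra k V) ⊗ₜ[k] prodGen k V us)
          + (prodGen k V ws ⊗ₜ[k] (1 : TensorAlgebra k V)) * DB (prodGen k V vs) (prodGen k V us) := by
    intro vs ws us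
    rw [← prodGen_append, hform, hform, hform]
    rw [Finset.sum_mul, Finset.mul_sum, ← Finset.sum_add_distrib]
    refine Finset.sum_congr rfl fun i _ => ?_
    rw [Finset.sum_mul, Finset.mul_sum]
    have hlen : ws.length + us.length = (ws ++ us).length := List.length_append.symm
    rw [← Fin.sum_congr' _ hlen, Fin.sum_univ_add]
    congr 1
    · refine Finset.sum_congr rfl fun j _ => ?_
      have hj : (j : ℕ) < ws.length := j.isLt
      rw [smul_mul_assoc, Algebra.TensorProduct.tmul_mul_tmul, mul_one,
        ← prodGen_append, List.append_assoc]
      simp only [Fin.coe_cast, Fin.coe_castAdd, List.get_eq_getElem]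
      rw [List.getElem_append_left hj, List.take_append_of_le_length hj.le,
        List.drop_append_of_le_length hj]
    · refine Finset.sum_congr rfl fun j _ => ?_
      rw [mul_smul_comm, Algebra.TensorProduct.tmul_mul_tmul, one_mul,
        ← prodGen_append, ← List.append_assoc]
      simp only [Fin.coe_cast, Fin.coe_natAdd, List.get_eq_getElem]
      rw [List.getElem_append_right (Nat.le_add_right _ _)]
      simp only [Nat.add_sub_cancel_left, List.take_append, Nat.add_assoc, List.drop_append]
      simp [List.take_of_length_le, List.drop_of_length_le]
  -- extend to arbitrary `c` by linearity
  have memtop : ∀ x : TensorAlgebra k V,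
      x ∈ Submodule.span k (Set.range (prodGen k V)) := fun x => by
    rw [prodGen_span k V]; exact Submodule.mem_top
  have step1 : ∀ (vs ws : List V) (c : TensorAlgebra k V),
      DB (prodGen k V vs) (prodGen k V ws * c)
        = DB (prodGen k V vs) (prodGen k V ws) * ((1 : TensorAlgebra k V) ⊗ₜ[k] c)
          + (prodGen k V ws ⊗ₜ[k] (1 : TensorAlgebra k V)) * DB (prodGen k V vs) c := by
    intro vs ws c
    induction memtop c using Submodule.span_induction with
    | mem x hx => obtain ⟨us, rfl⟩ := hx; exact key vs ws us
    | zero => simp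
    | add x y _ _ hx hy =>
        simp only [mul_add, map_add, TensorProduct.tmul_add, hx, hy]
        abel
    | smul r x _ hx =>
        simp only [mul_smul_comm, map_smul, TensorProduct.tmul_smul, hx, smul_add,
          smul_mul_assoc]
  -- extend to arbitrary `b` by linearity
  have step2 : ∀ (vs : List V) (b c : TensorAlgebra k V),
      DB (prodGen k V vs) (b * c)
        = DB (prodGen k V vs) b * ((1 : TensorAlgebra k V) ⊗ₜ[k] c)
          + (b ⊗ₜ[k] (1 : TensorAlgebra k V)) * DB (prodGen k V vs) c := by
    intro vs b c
    induction memtop b using Submodule.span_induction with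
    | mem x hx => obtain ⟨ws, rfl⟩ := hx; exact step1 vs ws c
    | zero => simp
    | add x y _ _ hx hy =>
        simp only [add_mul, map_add, TensorProduct.add_tmul, hx, hy]
        abel
    | smul r x _ hx =>
        simp only [smul_mul_assoc, map_smul, ← TensorProduct.smul_tmul', hx, smul_add]
  -- extend to arbitrary `a` by linearity
  intro a b c
  induction memtop a using Submodule.span_induction with
  | mem x hx => obtain ⟨vs, rfl⟩ := hx; exact step2 vs b c
  | zero => simp
  | add x y _ _ hx hy =>
      simp only [map_add, LinearMap.add_apply, hx, hy, add_mul, mul_add]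
      abel
  | smul r x _ hx =>
      simp only [map_smul, LinearMap.smul_apply, hx, smul_add, smul_mul_assoc,
        mul_smul_comm]
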